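/- Let F be a simple graph with at least one edge, with chromatic number k = χ(F), and let r ≥ k. There exists w_0 (depending only on F and r) such that for every w ≥ w_0 the following holds: if H is an r-uniform linear hypergraph whose 2-shadow Γ(H) contains as a subgraph a complete k-partite graph with w vertices in each of its k classes, then H contains a Berge-F. -/

import Mathlib

open Filter

/-- `G` contains a copy of `F` (a subgraph isomorphic to `F`). -/
def ContainsCopy {α β : Type*} (F : SimpleGraph α) (G : SimpleGraph β) : Prop :=
  ∃ f : α → β, Function.Injective f ∧ ∀ ⦃u v⦄, F.Adj u v → G.Adj (f u) (f v)

/-- The hypergraph `H` (a finite family of hyperedges) contains a Berge-`F`. -/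
def IsBerge {α V : Type*} (F : SimpleGraph α) (H : Finset (Finset V)) : Prop :=
  ∃ (ψ : α → V) (φ : Sym2 α → Finset V),
    Function.Injective ψ ∧ Set.InjOn φ F.edgeSet ∧
    (∀ e ∈ F.edgeSet, φ e ∈ H) ∧
    ∀ ⦃u v⦄, F.Adj u v → ψ u ∈ φ s(u, v) ∧ ψ v ∈ φ s(u, v)

/-- `exr r n F`: max number of hyperedges of an `r`-uniform Berge-`F`-free
hypergraph on `n` vertices. -/
noncomputable def exr {α : Type*} (r n : ℕ) (F : SimpleGraph α) : ℕ :=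
  sSup {m | ∃ H : Finset (Finset (Fin n)),
    (∀ e ∈ H, e.card = r) ∧ ¬ IsBerge F H ∧ H.card = m}

/-- A hypergraph is linear if distinct hyperedges meet in at most one vertex. -/
def LinearHypergraph {V : Type*} [DecidableEq V] (H : Finset (Finset V)) : Prop :=
  ∀ e₁ ∈ H, ∀ e₂ ∈ H, e₁ ≠ e₂ → (e₁ ∩ e₂).card ≤ 1

/-- `exrL r n F`: max number of hyperedges of an `r`-uniform linear
Berge-`F`-free hypergraph on `n` vertices. -/
noncomputable def exrL {α : Type*} (r n : ℕ) (F : SimpleGraph α) : ℕ :=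
  sSup {m | ∃ H : Finset (Finset (Fin n)),
    (∀ e ∈ H, e.card = r) ∧ LinearHypergraph H ∧ ¬ IsBerge F H ∧ H.card = m}

/-- The Ramsey number of `F` and `G`. -/
noncomputable def ramsey {α β : Type*} (F : SimpleGraph α) (G : SimpleGraph β) : ℕ :=
  sInf {N | ∀ C : SimpleGraph (Fin N), ContainsCopy F C ∨ ContainsCopy G Cᶜ}

/-- The 2-shadow of a hypergraph. -/
def shadow {V : Type*} (H : Finset (Finset V)) : SimpleGraph V where
  Adj u v := u ≠ v ∧ ∃ e ∈ H, u ∈ e ∧ v ∈ e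
  symm := by constructor; rintro u v ⟨h, e, he, hu, hv⟩; exact ⟨h.symm, e, he, hv, hu⟩
  loopless := ⟨fun u h => h.1 rfl⟩

/-- The graph Turán number `ex(n,F)`. -/
noncomputable def exGraph {α : Type*} (n : ℕ) (F : SimpleGraph α) : ℕ :=
  sSup {m | ∃ G : SimpleGraph (Fin n), ¬ ContainsCopy F G ∧ G.edgeSet.ncard = m}

/-- `ex(n, K_r, F)`: max number of `r`-cliques in an `F`-free graph on `n` vertices. -/
noncomputable def exClique {α : Type*} (n r : ℕ) (F : SimpleGraph α) : ℕ :=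
  sSup {m | ∃ G : SimpleGraph (Fin n), ¬ ContainsCopy F G ∧
    {s : Finset (Fin n) | G.IsNClique r s}.ncard = m}

/-- A `t`-admissible partition of the vertices of `F`: parts have size at most `t`
and between any two distinct parts there is at most one edge of `F`. -/
def IsAdmissible {α : Type*} [Fintype α] [DecidableEq α] (t : ℕ) (F : SimpleGraph α)
    (P : Finpartition (Finset.univ : Finset α)) : Prop :=
  (∀ A ∈ P.parts, A.card ≤ t) ∧
  ∀ A ∈ P.parts, ∀ B ∈ P.parts, A ≠ B →
    {p : α × α | p.1 ∈ A ∧ p.2 ∈ B ∧ F.Adj p.1 p.2}.ncard ≤ 1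

/-- The graph obtained from `F` by contracting each part of the partition `P`. -/
def contractGraph {α : Type*} [Fintype α] [DecidableEq α] (F : SimpleGraph α)
    (P : Finpartition (Finset.univ : Finset α)) : SimpleGraph {A // A ∈ P.parts} where
  Adj A B := A ≠ B ∧ ∃ v ∈ (A : Finset α), ∃ w ∈ (B : Finset α), F.Adj v w
  symm := by
    constructor
    rintro A B ⟨hne, v, hv, w, hw, hadj⟩
    exact ⟨hne.symm, w, hw, v, hv, hadj.symm⟩
  loopless := by constructor; rintro A ⟨hne, -⟩; exact hne rfl


/-- If `F` has an edge, `χ(F) = k` and `r ≥ k`, there is `w₀` (depending only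
on `F` and `r`) such that for all `w ≥ w₀`: every `r`-uniform linear hypergraph whose
2-shadow contains a copy of the complete `k`-partite graph with `w` vertices per class
contains a Berge-`F`. -/
theorem stmt14 {α : Type*} [Fintype α] (F : SimpleGraph α)
    (hF : F.edgeSet.Nonempty) (k : ℕ) (hk : F.chromaticNumber = (k : ℕ∞))
    (r : ℕ) (hr : k ≤ r) :
    ∃ w₀ : ℕ, ∀ w : ℕ, w₀ ≤ w → ∀ (V : Type) [DecidableEq V],
      ∀ H : Finset (Finset V),
        (∀ h ∈ H, h.card = r) → LinearHypergraph H →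
        ContainsCopy ((⊤ : SimpleGraph (Fin k)).comap (Prod.fst : Fin k × Fin w → Fin k))
          (shadow H) →
        IsBerge F H := by
  classical
  obtain ⟨u₀, v₀, huv₀⟩ : ∃ u v, F.Adj u v := by
    obtain ⟨q, hq⟩ := hF
    induction q using Sym2.ind with
    | _ x y => exact ⟨x, y, hq⟩
  have hcol : F.Colorable k := by
    rw [← SimpleGraph.chromaticNumber_le_iff_colorable]
    exact le_of_eq hk
  obtain ⟨C⟩ := hcol
  set n := Fintype.card α with hn
  set e : α ≃ Fin (Fintype.card α) := Fintype.equivFin α with he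
  have hfin : ∀ a : α, (e a : ℕ) < n := fun a => by rw [hn]; exact (e a).isLt
  have hidx : ∀ a b : α, (e a : ℕ) = (e b : ℕ) → a = b := by
    intro a b h
    exact e.injective (Fin.ext h)
  refine ⟨n + n * n * r + 1, ?_⟩
  rintro w hw V _ H hcard hlin ⟨f, hfinj, hfmap⟩
  have hw0 : n + n * n * r < w := by omega
  have hfinj2 : ∀ c : Fin k, Function.Injective (fun y : Fin w => f (c, y)) := by
    intro c y y' h
    simpa using congrArg Prod.snd (hfinj h)
  have hshadow : ∀ u v : α, F.Adj u v → ∀ y y' : Fin w,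
      ∃ E ∈ H, f (C u, y) ∈ E ∧ f (C v, y') ∈ E := by
    intro u v huv y y'
    have hadj : ((⊤ : SimpleGraph (Fin k)).comap
        (Prod.fst : Fin k × Fin w → Fin k)).Adj (C u, y) (C v, y') := by
      simp only [SimpleGraph.comap_adj, SimpleGraph.top_adj]
      exact C.valid huv
    obtain ⟨-, E, hE, h1, h2⟩ := hfmap hadj
    exact ⟨E, hE, h1, h2⟩
  have hwpos : 0 < w := by omega
  have key : ∀ m, m ≤ n → ∃ ψ : α → V,
      (∀ a : α, (e a : ℕ) < m → ∃ y : Fin w, ψ a = f (C a, y)) ∧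
      (∀ a b : α, (e a : ℕ) < m → (e b : ℕ) < m → ψ a = ψ b → a = b) ∧
      (∀ a : α, (e a : ℕ) < m → ∀ E ∈ H,
        (∃ b c : α, (e b : ℕ) < (e a : ℕ) ∧ (e c : ℕ) < (e a : ℕ) ∧
          ψ b ≠ ψ c ∧ ψ b ∈ E ∧ ψ c ∈ E) → ψ a ∉ E) := by
    intro m
    induction m with
    | zero =>
      intro _
      exact ⟨fun _ => f (C u₀, ⟨0, hwpos⟩), fun a ha => absurd ha (by omega),
        fun a b ha => absurd ha (by omega), fun a ha => absurd ha (by omega)⟩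
    | succ m ih =>
      intro hm
      obtain ⟨ψ, hA, hB, hC⟩ := ih (by omega)
      set a₀ : α := e.symm ⟨m, by rw [← hn]; omega⟩ with ha₀
      have hea₀ : (e a₀ : ℕ) = m := by rw [ha₀, Equiv.apply_symm_apply]
      have hlt_cases : ∀ a : α, (e a : ℕ) < m + 1 → (e a : ℕ) < m ∨ a = a₀ := by
        intro a ha
        rcases Nat.lt_or_ge (e a : ℕ) m with h | h
        · exact Or.inl h
        · exact Or.inr (hidx a a₀ (by omega))
      have hne_a₀ : ∀ a : α, (e a : ℕ) < m → a ≠ a₀ := by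
        intro a ha h
        rw [h, hea₀] at ha
        omega
      set P : Finset α := Finset.univ.filter (fun b => (e b : ℕ) < m) with hP
      set Bad : Finset (Finset V) := H.filter
        (fun E => ∃ p : α × α, p.1 ∈ P ∧ p.2 ∈ P ∧ ψ p.1 ≠ ψ p.2 ∧
          ψ p.1 ∈ E ∧ ψ p.2 ∈ E) with hBad
      have hmemP : P.card ≤ n := by
        calc P.card ≤ Finset.univ.card := Finset.card_filter_le _ _
        _ = n := by rw [Finset.card_univ, hn]
      have hBadcard : Bad.card ≤ n * n := by
        set pick : Finset V → α × α := fun E =>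
          if h : ∃ p : α × α, p.1 ∈ P ∧ p.2 ∈ P ∧ ψ p.1 ≠ ψ p.2 ∧
            ψ p.1 ∈ E ∧ ψ p.2 ∈ E
          then h.choose else (a₀, a₀) with hpick
        have hspec : ∀ E ∈ Bad, (pick E).1 ∈ P ∧ (pick E).2 ∈ P ∧
            ψ (pick E).1 ≠ ψ (pick E).2 ∧ ψ (pick E).1 ∈ E ∧ ψ (pick E).2 ∈ E := by
          intro E hE
          have h := (Finset.mem_filter.mp hE).2
          rw [hpick]
          simp only [dif_pos h]
          exact h.choose_spec
        calc Bad.card ≤ (P ×ˢ P).card := by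
              apply Finset.card_le_card_of_injOn pick
              · intro E hE
                obtain ⟨h1, h2, -⟩ := hspec E hE
                exact Finset.mem_product.mpr ⟨h1, h2⟩
              · intro E hE E' hE' hEE'
                obtain ⟨-, -, hne, hm1, hm2⟩ := hspec E (by exact hE)
                obtain ⟨-, -, -, hm1', hm2'⟩ := hspec E' (by exact hE')
                rw [hEE'] at hne hm1 hm2
                by_contra hEne
                have hl := hlin E (Finset.mem_of_mem_filter E hE) E'
                  (Finset.mem_of_mem_filter E' hE') hEne
                have hsub : {ψ (pick E').1, ψ (pick E').2} ⊆ E ∩ E' := by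
                  intro x hx
                  rcases Finset.mem_insert.mp hx with rfl | hx
                  · exact Finset.mem_inter.mpr ⟨hm1, hm1'⟩
                  · rw [Finset.mem_singleton.mp hx]
                    exact Finset.mem_inter.mpr ⟨hm2, hm2'⟩
                have h2le := Finset.card_le_card hsub
                rw [Finset.card_pair hne] at h2le
                omega
          _ = P.card * P.card := Finset.card_product P P
          _ ≤ n * n := Nat.mul_le_mul hmemP hmemP
      set B : Finset V := P.image ψ ∪ Bad.biUnion id with hBdef
      have hBcard : B.card ≤ n + n * n * r := by
        have h1 : (P.image ψ).card ≤ n := le_trans (Finset.card_image_le) hmemP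
        have h2 : (Bad.biUnion id).card ≤ Bad.card * r :=
          Finset.card_biUnion_le_card_mul _ _ _
            (fun E hE => le_of_eq (hcard E (Finset.mem_of_mem_filter E hE)))
        have h3 := Finset.card_union_le (P.image ψ) (Bad.biUnion id)
        have h4 := Nat.mul_le_mul_right r hBadcard
        rw [hBdef]
        omega
      obtain ⟨y₀, hy₀⟩ : ∃ y : Fin w, f (C a₀, y) ∉ B := by
        by_contra hcon
        push_neg at hcon
        have hsub : Finset.univ.image (fun y : Fin w => f (C a₀, y)) ⊆ B := by
          intro x hx
          obtain ⟨y, -, rfl⟩ := Finset.mem_image.mp hx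
          exact hcon y
        have hle := Finset.card_le_card hsub
        rw [Finset.card_image_of_injective _ (hfinj2 (C a₀)), Finset.card_univ,
          Fintype.card_fin] at hle
        omega
      set ψ' : α → V := fun a => if a = a₀ then f (C a₀, y₀) else ψ a with hψ'
      have hψ'a₀ : ψ' a₀ = f (C a₀, y₀) := by rw [hψ']; simp
      have hψ'old : ∀ a : α, a ≠ a₀ → ψ' a = ψ a := by
        intro a h
        rw [hψ']
        simp [h]
      have hnewB : ∀ x ∈ B, ψ' a₀ ≠ x := by
        intro x hx h
        rw [hψ'a₀] at h
        rw [h] at hy₀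
        exact hy₀ hx
      refine ⟨ψ', ?_, ?_, ?_⟩
      · intro a ha
        rcases hlt_cases a ha with h | rfl
        · rw [hψ'old a (hne_a₀ a h)]
          exact hA a h
        · exact ⟨y₀, hψ'a₀⟩
      · intro a b ha hb hab
        rcases hlt_cases a ha with h | rfl
        · rcases hlt_cases b hb with h' | rfl
          · apply hB a b h h'
            rw [← hψ'old a (hne_a₀ a h), ← hψ'old b (hne_a₀ b h')]
            exact hab
          · exfalso
            apply hnewB (ψ a)
            · apply Finset.mem_union_left
              exact Finset.mem_image_of_mem ψ
                (Finset.mem_filter.mpr ⟨Finset.mem_univ a, h⟩)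
            · rw [← hψ'old a (hne_a₀ a h)]
              exact hab.symm
        · rcases hlt_cases b hb with h' | rfl
          · exfalso
            apply hnewB (ψ b)
            · apply Finset.mem_union_left
              exact Finset.mem_image_of_mem ψ
                (Finset.mem_filter.mpr ⟨Finset.mem_univ b, h'⟩)
            · rw [← hψ'old b (hne_a₀ b h')]
              exact hab
          · rfl
      · rintro a ha E hE ⟨b, c, hb, hc, hbc, hbE, hcE⟩
        rcases hlt_cases a ha with h | rfl
        · have hbm : (e b : ℕ) < m := by omega
          have hcm : (e c : ℕ) < m := by omega
          rw [hψ'old a (hne_a₀ a h)]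
          rw [hψ'old b (hne_a₀ b hbm)] at hbc hbE
          rw [hψ'old c (hne_a₀ c hcm)] at hbc hcE
          exact hC a h E hE ⟨b, c, hb, hc, hbc, hbE, hcE⟩
        · rw [hea₀] at hb hc
          rw [hψ'old b (hne_a₀ b hb)] at hbc hbE
          rw [hψ'old c (hne_a₀ c hc)] at hbc hcE
          have hEBad : E ∈ Bad := by
            rw [hBad]
            refine Finset.mem_filter.mpr ⟨hE, ⟨(b, c), ?_, ?_, hbc, hbE, hcE⟩⟩
            · exact Finset.mem_filter.mpr ⟨Finset.mem_univ b, hb⟩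
            · exact Finset.mem_filter.mpr ⟨Finset.mem_univ c, hc⟩
          intro hmem
          apply hnewB (ψ' a₀) _ rfl
          apply Finset.mem_union_right
          exact Finset.mem_biUnion.mpr ⟨E, hEBad, hmem⟩
  obtain ⟨ψ, hA, hB, hC⟩ := key n le_rfl
  have hinjψ : Function.Injective ψ := fun a b h => hB a b (hfin a) (hfin b) h
  have hCn : ∀ a : α, ∀ E ∈ H,
      (∃ b c : α, (e b : ℕ) < (e a : ℕ) ∧ (e c : ℕ) < (e a : ℕ) ∧
        ψ b ≠ ψ c ∧ ψ b ∈ E ∧ ψ c ∈ E) → ψ a ∉ E :=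
    fun a => hC a (hfin a)
  set φ : Sym2 α → Finset V := fun q =>
    if h : ∃ E, E ∈ H ∧ ∀ x ∈ q, ψ x ∈ E then h.choose else ∅ with hφdef
  have hφ : ∀ u v : α, F.Adj u v →
      φ s(u,v) ∈ H ∧ ψ u ∈ φ s(u,v) ∧ ψ v ∈ φ s(u,v) := by
    intro u v huv
    have hex : ∃ E, E ∈ H ∧ ∀ x ∈ (s(u,v) : Sym2 α), ψ x ∈ E := by
      obtain ⟨y, hy⟩ := hA u (hfin u)
      obtain ⟨y', hy'⟩ := hA v (hfin v)
      obtain ⟨E, hE, h1, h2⟩ := hshadow u v huv y y'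
      refine ⟨E, hE, ?_⟩
      intro x hx
      rcases Sym2.mem_iff.mp hx with rfl | rfl
      · rw [hy]; exact h1
      · rw [hy']; exact h2
    rw [hφdef]
    simp only [dif_pos hex]
    refine ⟨hex.choose_spec.1, ?_, ?_⟩
    · exact hex.choose_spec.2 u (Sym2.mem_mk_left u v)
    · exact hex.choose_spec.2 v (Sym2.mem_mk_right u v)
  have hrep : ∀ q ∈ F.edgeSet, ∃ u v : α,
      F.Adj u v ∧ (e v : ℕ) < (e u : ℕ) ∧ q = s(u,v) := by
    intro q hq
    induction q using Sym2.ind with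
    | _ x y =>
      have hadj : F.Adj x y := hq
      have hne : (e x : ℕ) ≠ (e y : ℕ) := fun h => hadj.ne (hidx x y h)
      rcases Nat.lt_or_ge (e x : ℕ) (e y : ℕ) with h | h
      · exact ⟨y, x, hadj.symm, h, Sym2.eq_swap⟩
      · exact ⟨x, y, hadj, by omega, rfl⟩
  have claim : ∀ u v u' v' : α, F.Adj u v → F.Adj u' v' →
      (e v : ℕ) < (e u : ℕ) → (e v' : ℕ) < (e u' : ℕ) → (e u' : ℕ) ≤ (e u : ℕ) →
      s(u,v) ≠ s(u',v') → φ s(u,v) = φ s(u',v') → False := by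
    intro u v u' v' huv huv' hvu hvu' hle hne heq
    obtain ⟨hEH, hu, hv⟩ := hφ u v huv
    obtain ⟨-, hu', hv'⟩ := hφ u' v' huv'
    rw [← heq] at hu' hv'
    by_cases hcase : u' = u
    · subst hcase
      have hvv' : v ≠ v' := fun h => hne (by rw [h])
      exact hCn u' (φ s(u', v)) hEH
        ⟨v, v', hvu, hvu', fun h => hvv' (hinjψ h), hv, hv'⟩ hu
    · have hlt : (e u' : ℕ) < (e u : ℕ) :=
        lt_of_le_of_ne hle (fun h => hcase (hidx u' u h))
      exact hCn u (φ s(u, v)) hEH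
        ⟨u', v', hlt, by omega, fun h => huv'.ne (hinjψ h), hu', hv'⟩ hu
  refine ⟨ψ, φ, hinjψ, ?_, ?_, fun u v huv => ⟨(hφ u v huv).2.1, (hφ u v huv).2.2⟩⟩
  · intro q hq q' hq' heq
    obtain ⟨u, v, huv, hvu, rfl⟩ := hrep q hq
    obtain ⟨u', v', huv', hvu', rfl⟩ := hrep q' hq'
    by_contra hne
    rcases le_or_gt (e u' : ℕ) (e u : ℕ) with h | h
    · exact claim u v u' v' huv huv' hvu hvu' h hne heq
    · exact claim u' v' u v huv' huv hvu' hvu (le_of_lt h)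
        (fun hh => hne hh.symm) heq.symm
  · intro q hq
    obtain ⟨u, v, huv, -, rfl⟩ := hrep q hq
    exact (hφ u v huv).1
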